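/- Let A be a finite-dimensional Hopf algebra over a field k and let J be a normalized twist for A. Then the Killing form of A is invariant under twisting: (a, b)^J = (a, b) for all a, b ∈ A, where (a,b) = tr(ad(ab)) is the Killing form of A and (a,b)^J = tr(ad^J(ab)) is the Killing form of the twisted Hopf algebra A^J. In particular the Killing radicals coincide: A^⊥ = (A^J)^⊥. -/

import Mathlib

open TensorProduct

noncomputable section

variable (k : Type*) [Field k] (A : Type*) [Ring A] [HopfAlgebra k A]

/-- `PposGen D n a = a₍₁₎ ⋯ a₍ₙ₎` (with value `ε(a)1` for `n = 0`), built from a given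
comultiplication-like map `D`. -/
def PposGen (D : A →ₗ[k] A ⊗[k] A) : ℕ → (A →ₗ[k] A)
  | 0 => Algebra.linearMap k A ∘ₗ Coalgebra.counit
  | n+1 => LinearMap.mul' k A ∘ₗ TensorProduct.map LinearMap.id (PposGen D n) ∘ₗ D

/-- Reversed products of Sweedler components: `QposGen D n a = a₍ₙ₎ ⋯ a₍₁₎`. -/
def QposGen (D : A →ₗ[k] A ⊗[k] A) : ℕ → (A →ₗ[k] A)
  | 0 => Algebra.linearMap k A ∘ₗ Coalgebra.counit
  | n+1 => LinearMap.mul' k A ∘ₗ (TensorProduct.comm k A A).toLinearMap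
      ∘ₗ TensorProduct.map LinearMap.id (QposGen D n) ∘ₗ D

/-- The `n`-th Sweedler power map associated to a comultiplication-like map `D` and an
antipode-like map `S'`: for `n ≥ 0` it is `a ↦ a₍₁₎ ⋯ a₍ₙ₎`, and for `n ≤ -1` it is
`a ↦ S'(a₍₋ₙ₎ ⋯ a₍₁₎)`. -/
def PGen (D : A →ₗ[k] A ⊗[k] A) (S' : A →ₗ[k] A) (n : ℤ) : A →ₗ[k] A :=
  if 0 ≤ n then PposGen k A D n.toNat else S' ∘ₗ QposGen k A D (-n).toNat

/-- The `n`-th Sweedler power map `P_n` of the Hopf algebra `A`. -/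
def SweedlerP (n : ℤ) : A →ₗ[k] A :=
  PGen k A Coalgebra.comul (HopfAlgebra.antipode (R := k)) n

/-- `Λ` is a left integral in `A`: `a Λ = ε(a) Λ` for all `a`. -/
def IsLeftIntegral (Λ : A) : Prop := ∀ a : A, a * Λ = Coalgebra.counit (R := k) a • Λ

/-- `α ∈ A*` is the distinguished group-like element associated to the left integral `Λ`:
`Λ a = α(a) Λ` for all `a`. -/
def IsDistinguished (Λ : A) (α : A →ₗ[k] k) : Prop := ∀ a : A, Λ * a = α a • Λ

/-- `a† = a₍₁₎ α(S⁻¹(a₍₂₎))`, as a linear map in `a` (here `Sinv` is the inverse of the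
antipode and `α` is the distinguished group-like element). -/
def dagger (α : A →ₗ[k] k) (Sinv : A →ₗ[k] A) : A →ₗ[k] A :=
  (TensorProduct.rid k A).toLinearMap ∘ₗ
    TensorProduct.map LinearMap.id (α ∘ₗ Sinv) ∘ₗ Coalgebra.comul

/-- A normalized twist `J` for the Hopf algebra `A`: an invertible element of `A ⊗ A`
(with specified inverse) satisfying `(ε ⊗ id)(J) = (id ⊗ ε)(J) = 1` and the cocycle
condition `(Δ ⊗ id)(J)(J ⊗ 1) = (id ⊗ Δ)(J)(1 ⊗ J)`. -/
structure NormalizedTwist where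
  J : A ⊗[k] A
  Jinv : A ⊗[k] A
  mul_inv : J * Jinv = 1
  inv_mul : Jinv * J = 1
  counit_id : (TensorProduct.lid k A) ((TensorProduct.map Coalgebra.counit LinearMap.id) J) = 1
  id_counit : (TensorProduct.rid k A) ((TensorProduct.map LinearMap.id Coalgebra.counit) J) = 1
  cocycle : (Algebra.TensorProduct.assoc k k k A A A)
      ((TensorProduct.map Coalgebra.comul LinearMap.id) J * (J ⊗ₜ[k] (1 : A)))
    = (TensorProduct.map LinearMap.id Coalgebra.comul) J * ((1 : A) ⊗ₜ[k] J)

variable {k A} (t : NormalizedTwist k A)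

/-- `Q_J = S(J⁽¹⁾) J⁽²⁾`. -/
def NormalizedTwist.QJ : A :=
  LinearMap.mul' k A ((TensorProduct.map (HopfAlgebra.antipode (R := k)) LinearMap.id) t.J)

/-- `Q_J⁻¹ = J⁻⁽¹⁾ S(J⁻⁽²⁾)`. -/
def NormalizedTwist.QJinv : A :=
  LinearMap.mul' k A ((TensorProduct.map LinearMap.id (HopfAlgebra.antipode (R := k))) t.Jinv)

/-- The twisted comultiplication `Δᴶ(a) = J⁻¹ Δ(a) J`. -/
def NormalizedTwist.comulJ : A →ₗ[k] A ⊗[k] A :=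
  LinearMap.mulLeft k t.Jinv ∘ₗ LinearMap.mulRight k t.J ∘ₗ Coalgebra.comul

/-- The twisted antipode `Sᴶ(a) = Q_J⁻¹ S(a) Q_J`. -/
def NormalizedTwist.SJ : A →ₗ[k] A :=
  LinearMap.mulLeft k t.QJinv ∘ₗ LinearMap.mulRight k t.QJ ∘ₗ HopfAlgebra.antipode (R := k)

/-- The `n`-th Sweedler power map of the twisted Hopf algebra `A^J`. -/
def NormalizedTwist.PJ (n : ℤ) : A →ₗ[k] A := PGen k A t.comulJ t.SJ n

/-- `T = J⁻⁽¹⁾ α(J⁻⁽²⁾)`. -/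
def NormalizedTwist.Telt (α : A →ₗ[k] k) : A :=
  (TensorProduct.rid k A) ((TensorProduct.map LinearMap.id α) t.Jinv)

/-- `R = α(J⁻⁽¹⁾) J⁻⁽²⁾`. -/
def NormalizedTwist.Relt (α : A →ₗ[k] k) : A :=
  (TensorProduct.lid k A) ((TensorProduct.map α LinearMap.id) t.Jinv)

/-- `R⁻¹ = α(J⁽¹⁾) J⁽²⁾`. -/
def NormalizedTwist.Rinv (α : A →ₗ[k] k) : A :=
  (TensorProduct.lid k A) ((TensorProduct.map α LinearMap.id) t.J)

end

noncomputable section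

variable (k : Type*) [Field k] (A : Type*) [Ring A] [HopfAlgebra k A]

/-- The adjoint representation associated to a comultiplication-like map `D` and an
antipode-like map `S'`: `(ad a)(b) = a₍₁₎ b S'(a₍₂₎)` (Sweedler components taken with
respect to `D`). -/
def adGen (D : A →ₗ[k] A ⊗[k] A) (S' : A →ₗ[k] A) : A →ₗ[k] A →ₗ[k] A :=
  TensorProduct.lift (LinearMap.mk₂ k
    (fun x y => LinearMap.mulLeft k x ∘ₗ LinearMap.mulRight k (S' y))
    (fun x x' y => by ext b; simp [add_mul])
    (fun c x y => by ext b; simp [smul_mul_assoc])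
    (fun x y y' => by ext b; simp [mul_add])
    (fun c x y => by ext b; simp [mul_smul_comm])) ∘ₗ D

/-- The adjoint representation `(ad a)(b) = a₍₁₎ b S(a₍₂₎)` of the Hopf algebra `A`. -/
def adRep : A →ₗ[k] A →ₗ[k] A :=
  adGen k A (Coalgebra.comul (R := k)) (HopfAlgebra.antipode (R := k))

/-- The Killing form `(a, b) = tr(ad(ab))` associated to `D` and `S'`. -/
def killingForm' (D : A →ₗ[k] A ⊗[k] A) (S' : A →ₗ[k] A) (a b : A) : k :=
  LinearMap.trace k A (adGen k A D S' (a * b))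

/-- The Killing radical `A^⊥ = {a ∈ A ∣ (a, b) = 0 for all b ∈ A}`, as a `k`-submodule. -/
def killingRad (D : A →ₗ[k] A ⊗[k] A) (S' : A →ₗ[k] A) : Submodule k A where
  carrier := {a : A | ∀ b : A, killingForm' k A D S' a b = 0}
  add_mem' := by
    intro a a' ha ha' b
    simp only [killingForm', Set.mem_setOf_eq] at ha ha' ⊢
    rw [add_mul, map_add, map_add, ha b, ha' b, add_zero]
  zero_mem' := by
    intro b
    simp [killingForm']
  smul_mem' := by
    intro c a ha b
    have := ha b
    simp only [killingForm'] at *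
    rw [smul_mul_assoc, map_smul, map_smul, this, smul_zero]

end


/-! ### Auxiliary lemmas: antipode is a unital anti-homomorphism, twist facts, trace argument -/

noncomputable section AuxHopf
open TensorProduct Coalgebra
open TensorProduct Coalgebra
variable {k : Type*} [Field k] {A : Type*} [Ring A] [HopfAlgebra k A]

local notation "S" => HopfAlgebra.antipode (R := k)
local notation "m" => LinearMap.mul' k A

lemma antipode_one' : HopfAlgebra.antipode (R := k) (1 : A) = 1 := by
  have := HopfAlgebra.mul_antipode_rTensor_comul_apply (R := k) (1 : A)
  simpa [Bialgebra.comul_one, Algebra.TensorProduct.one_def] using this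

lemma sum_counit_smul_right {a : A} {ι : Type*} (r : Coalgebra.Repr k a ι) :
    ∑ i ∈ r.index, counit (R := k) (r.left i) • r.right i = a := by
  have h := Coalgebra.sum_counit_tmul_eq (R := k) r
  calc ∑ i ∈ r.index, counit (R := k) (r.left i) • r.right i
      = TensorProduct.lid k A (∑ i ∈ r.index, counit (R := k) (r.left i) ⊗ₜ[k] r.right i) := by
        rw [map_sum]; simp
    _ = a := by rw [h]; simp

lemma sum_smul_counit_left {a : A} {ι : Type*} (r : Coalgebra.Repr k a ι) :
    ∑ i ∈ r.index, counit (R := k) (r.right i) • r.left i = a := by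
  have h := Coalgebra.sum_tmul_counit_eq (R := k) r
  calc ∑ i ∈ r.index, counit (R := k) (r.right i) • r.left i
      = TensorProduct.rid k A (∑ i ∈ r.index, r.left i ⊗ₜ[k] counit (R := k) (r.right i)) := by
        rw [map_sum]; simp
    _ = a := by rw [h]; simp

/-- Representation of `comul (a*b)` from representations of `comul a`, `comul b`. -/
def reprMul {a b : A} {ι κ : Type*} (r : Coalgebra.Repr k a ι) (s : Coalgebra.Repr k b κ) :
    Coalgebra.Repr k (a * b) (ι × κ) where
  index := r.index ×ˢ s.index
  left p := r.left p.1 * s.left p.2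
  right p := r.right p.1 * s.right p.2
  eq := by
    rw [Finset.sum_product, Bialgebra.comul_mul, ← r.eq, ← s.eq, Finset.sum_mul_sum]
    simp [Algebra.TensorProduct.tmul_mul_tmul]

lemma coassoc_repr {a : A} {ι κ : Type*} (r : Coalgebra.Repr k a ι)
    (rr : ∀ i : ι, Coalgebra.Repr k (r.right i) κ)
    (rl : ∀ i : ι, Coalgebra.Repr k (r.left i) κ) :
    ∑ i ∈ r.index, ∑ p ∈ (rr i).index,
        r.left i ⊗ₜ[k] ((rr i).left p ⊗ₜ[k] (rr i).right p)
      = ∑ i ∈ r.index, ∑ p ∈ (rl i).index,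
        (rl i).left p ⊗ₜ[k] ((rl i).right p ⊗ₜ[k] r.right i) := by
  have hL : ∑ i ∈ r.index, ∑ p ∈ (rr i).index,
      r.left i ⊗ₜ[k] ((rr i).left p ⊗ₜ[k] (rr i).right p)
      = (LinearMap.lTensor A (comul (R := k))) (comul (R := k) a) := by
    rw [← r.eq, map_sum]
    refine Finset.sum_congr rfl fun i _ => ?_
    rw [LinearMap.lTensor_tmul, ← (rr i).eq, tmul_sum]
  have hR : ∑ i ∈ r.index, ∑ p ∈ (rl i).index,
      (rl i).left p ⊗ₜ[k] ((rl i).right p ⊗ₜ[k] r.right i)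
      = (TensorProduct.assoc k A A A).toLinearMap
          ((LinearMap.rTensor A (comul (R := k))) (comul (R := k) a)) := by
    rw [← r.eq, map_sum, map_sum]
    refine Finset.sum_congr rfl fun i _ => ?_
    rw [LinearMap.rTensor_tmul, ← (rl i).eq, sum_tmul, map_sum]
    exact Finset.sum_congr rfl fun p _ => rfl
  rw [hL, hR]
  exact (Coalgebra.coassoc_apply a).symm

/-- `Ξ ((x⊗(y⊗z)) ⊗ (u⊗(v⊗w))) = S(x*u) * ((y*v) * (S w * S z))`. -/
noncomputable def Xi : (A ⊗[k] (A ⊗[k] A)) ⊗[k] (A ⊗[k] (A ⊗[k] A)) →ₗ[k] A :=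
  (m ∘ₗ map (S ∘ₗ m) (m ∘ₗ map m (m ∘ₗ map S S ∘ₗ (TensorProduct.comm k A A).toLinearMap)))
    ∘ₗ (LinearMap.lTensor (A ⊗[k] A)
        (tensorTensorTensorComm k A A A A).toLinearMap)
    ∘ₗ (tensorTensorTensorComm k A (A ⊗[k] A) A (A ⊗[k] A)).toLinearMap

@[simp] lemma Xi_tmul (x y z u v w : A) :
    Xi ((x ⊗ₜ[k] (y ⊗ₜ[k] z)) ⊗ₜ[k] (u ⊗ₜ[k] (v ⊗ₜ[k] w)))
      = S (x * u) * ((y * v) * (S w * S z)) := by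
  simp [Xi, tensorTensorTensorComm_tmul]

lemma apply_sum_tmul_sum {M N P : Type*} [AddCommMonoid M] [AddCommMonoid N] [AddCommMonoid P]
    [Module k M] [Module k N] [Module k P]
    (F : M ⊗[k] N →ₗ[k] P) {ι κ : Type*} (I : Finset ι) (Jd : Finset κ)
    (f : ι → M) (g : κ → N) :
    F ((∑ i ∈ I, f i) ⊗ₜ[k] (∑ j ∈ Jd, g j)) = ∑ i ∈ I, ∑ j ∈ Jd, F (f i ⊗ₜ[k] g j) := by
  rw [sum_tmul, map_sum]
  exact Finset.sum_congr rfl fun i _ => by rw [tmul_sum, map_sum]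

theorem antipode_mul' (a b : A) : S (a * b) = S b * S a := by
  classical
  let r := ℛ k a
  let s := ℛ k b
  let rr : ∀ i : A × A, Coalgebra.Repr k (r.right i) (A × A) := fun i => ℛ k (r.right i)
  let rl : ∀ i : A × A, Coalgebra.Repr k (r.left i) (A × A) := fun i => ℛ k (r.left i)
  let ss : ∀ j : A × A, Coalgebra.Repr k (s.right j) (A × A) := fun j => ℛ k (s.right j)
  let sl : ∀ j : A × A, Coalgebra.Repr k (s.left j) (A × A) := fun j => ℛ k (s.left j)
  let Ya : A ⊗[k] (A ⊗[k] A) := ∑ i ∈ r.index, ∑ p ∈ (rr i).index,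
      r.left i ⊗ₜ[k] ((rr i).left p ⊗ₜ[k] (rr i).right p)
  let Yb : A ⊗[k] (A ⊗[k] A) := ∑ j ∈ s.index, ∑ q ∈ (ss j).index,
      s.left j ⊗ₜ[k] ((ss j).left q ⊗ₜ[k] (ss j).right q)
  have hM1 : Xi (Ya ⊗ₜ[k] Yb) = S (a * b) := by
    rw [apply_sum_tmul_sum]
    have hij : ∀ i ∈ r.index, ∀ j ∈ s.index,
        Xi ((∑ p ∈ (rr i).index, r.left i ⊗ₜ[k] ((rr i).left p ⊗ₜ[k] (rr i).right p)) ⊗ₜ[k]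
            (∑ q ∈ (ss j).index, s.left j ⊗ₜ[k] ((ss j).left q ⊗ₜ[k] (ss j).right q)))
          = counit (R := k) (r.right i) • (counit (R := k) (s.right j) •
              S (r.left i * s.left j)) := by
      intro i _ j _
      rw [apply_sum_tmul_sum]
      have hq : ∀ p ∈ (rr i).index,
          ∑ q ∈ (ss j).index, Xi ((r.left i ⊗ₜ[k] ((rr i).left p ⊗ₜ[k] (rr i).right p)) ⊗ₜ[k]
              (s.left j ⊗ₜ[k] ((ss j).left q ⊗ₜ[k] (ss j).right q)))
            = counit (R := k) (s.right j) •
                (S (r.left i * s.left j) * ((rr i).left p * S ((rr i).right p))) := by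
        intro p _
        calc ∑ q ∈ (ss j).index, Xi _
            = ∑ q ∈ (ss j).index, S (r.left i * s.left j) *
                ((rr i).left p * (((ss j).left q * S ((ss j).right q)) * S ((rr i).right p))) := by
              refine Finset.sum_congr rfl fun q _ => ?_
              rw [Xi_tmul]; simp only [mul_assoc]
          _ = S (r.left i * s.left j) *
                ((rr i).left p * ((∑ q ∈ (ss j).index, (ss j).left q * S ((ss j).right q)) *
                  S ((rr i).right p))) := by
              rw [Finset.sum_mul, Finset.mul_sum, Finset.mul_sum]
          _ = counit (R := k) (s.right j) •
                (S (r.left i * s.left j) * ((rr i).left p * S ((rr i).right p))) := by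
              rw [HopfAlgebra.sum_mul_antipode_eq_smul (ss j)]
              simp [smul_mul_assoc, mul_smul_comm]
      calc ∑ p ∈ (rr i).index, ∑ q ∈ (ss j).index, Xi _
          = ∑ p ∈ (rr i).index, counit (R := k) (s.right j) •
              (S (r.left i * s.left j) * ((rr i).left p * S ((rr i).right p))) :=
            Finset.sum_congr rfl hq
        _ = counit (R := k) (s.right j) •
              (S (r.left i * s.left j) * (∑ p ∈ (rr i).index, (rr i).left p * S ((rr i).right p))) := by
            rw [← Finset.smul_sum, ← Finset.mul_sum]
        _ = counit (R := k) (r.right i) • (counit (R := k) (s.right j) •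
              S (r.left i * s.left j)) := by
            rw [HopfAlgebra.sum_mul_antipode_eq_smul (rr i)]
            rw [mul_smul_comm, mul_one, smul_comm]
    calc ∑ i ∈ r.index, ∑ j ∈ s.index, Xi _
        = ∑ i ∈ r.index, ∑ j ∈ s.index, counit (R := k) (r.right i) •
            (counit (R := k) (s.right j) • S (r.left i * s.left j)) := by
          refine Finset.sum_congr rfl fun i hi => Finset.sum_congr rfl fun j hj => hij i hi j hj
      _ = ∑ i ∈ r.index, counit (R := k) (r.right i) • S (r.left i * b) := by
          refine Finset.sum_congr rfl fun i _ => ?_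
          rw [← Finset.smul_sum]
          congr 1
          calc ∑ j ∈ s.index, counit (R := k) (s.right j) • S (r.left i * s.left j)
              = S (∑ j ∈ s.index, r.left i * (counit (R := k) (s.right j) • s.left j)) := by
                rw [map_sum]
                exact Finset.sum_congr rfl fun j _ => by rw [mul_smul_comm, map_smul]
            _ = S (r.left i * b) := by rw [← Finset.mul_sum, sum_smul_counit_left s]
      _ = S (a * b) := by
          calc ∑ i ∈ r.index, counit (R := k) (r.right i) • S (r.left i * b)
              = S (∑ i ∈ r.index, (counit (R := k) (r.right i) • r.left i) * b) := by
                rw [map_sum]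
                exact Finset.sum_congr rfl fun i _ => by rw [smul_mul_assoc, map_smul]
            _ = S (a * b) := by rw [← Finset.sum_mul, sum_smul_counit_left r]
  have hM2 : Xi (Ya ⊗ₜ[k] Yb) = S b * S a := by
    have hYa : Ya = ∑ i ∈ r.index, ∑ p ∈ (rl i).index,
        (rl i).left p ⊗ₜ[k] ((rl i).right p ⊗ₜ[k] r.right i) := coassoc_repr r rr rl
    have hYb : Yb = ∑ j ∈ s.index, ∑ q ∈ (sl j).index,
        (sl j).left q ⊗ₜ[k] ((sl j).right q ⊗ₜ[k] s.right j) := coassoc_repr s ss sl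
    rw [hYa, hYb, apply_sum_tmul_sum]
    have hij : ∀ i ∈ r.index, ∀ j ∈ s.index,
        Xi ((∑ p ∈ (rl i).index, (rl i).left p ⊗ₜ[k] ((rl i).right p ⊗ₜ[k] r.right i)) ⊗ₜ[k]
            (∑ q ∈ (sl j).index, (sl j).left q ⊗ₜ[k] ((sl j).right q ⊗ₜ[k] s.right j)))
          = counit (R := k) (r.left i) • (counit (R := k) (s.left j) •
              (S (s.right j) * S (r.right i))) := by
      intro i _ j _
      rw [apply_sum_tmul_sum]
      calc ∑ p ∈ (rl i).index, ∑ q ∈ (sl j).index, Xi _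
          = ∑ p ∈ (rl i).index, ∑ q ∈ (sl j).index,
              (S ((rl i).left p * (sl j).left q) * ((rl i).right p * (sl j).right q)) *
                (S (s.right j) * S (r.right i)) := by
            refine Finset.sum_congr rfl fun p _ => Finset.sum_congr rfl fun q _ => ?_
            rw [Xi_tmul]; simp only [mul_assoc]
        _ = (∑ p ∈ (rl i).index, ∑ q ∈ (sl j).index,
              S ((rl i).left p * (sl j).left q) * ((rl i).right p * (sl j).right q)) *
                (S (s.right j) * S (r.right i)) := by
            rw [Finset.sum_mul]
            refine Finset.sum_congr rfl fun p _ => ?_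
            rw [Finset.sum_mul]
        _ = (∑ x ∈ (reprMul (rl i) (sl j)).index,
              S ((reprMul (rl i) (sl j)).left x) * (reprMul (rl i) (sl j)).right x) *
                (S (s.right j) * S (r.right i)) := by
            rw [← Finset.sum_product']
            rfl
        _ = counit (R := k) (r.left i) • (counit (R := k) (s.left j) •
              (S (s.right j) * S (r.right i))) := by
            rw [HopfAlgebra.sum_antipode_mul_eq_smul (reprMul (rl i) (sl j))]
            rw [smul_mul_assoc, one_mul, Bialgebra.counit_mul, mul_smul]
    calc ∑ i ∈ r.index, ∑ j ∈ s.index, Xi _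
        = ∑ i ∈ r.index, ∑ j ∈ s.index, counit (R := k) (r.left i) •
            (counit (R := k) (s.left j) • (S (s.right j) * S (r.right i))) := by
          exact Finset.sum_congr rfl fun i hi => Finset.sum_congr rfl fun j hj => hij i hi j hj
      _ = ∑ i ∈ r.index, counit (R := k) (r.left i) • (S b * S (r.right i)) := by
          refine Finset.sum_congr rfl fun i _ => ?_
          rw [← Finset.smul_sum]
          congr 1
          calc ∑ j ∈ s.index, counit (R := k) (s.left j) • (S (s.right j) * S (r.right i))
              = (∑ j ∈ s.index, counit (R := k) (s.left j) • S (s.right j)) * S (r.right i) := by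
                rw [Finset.sum_mul]
                exact Finset.sum_congr rfl fun j _ => (smul_mul_assoc _ _ _).symm
            _ = S b * S (r.right i) := by
                congr 1
                calc ∑ j ∈ s.index, counit (R := k) (s.left j) • S (s.right j)
                    = S (∑ j ∈ s.index, counit (R := k) (s.left j) • s.right j) := by
                      rw [map_sum]
                      exact Finset.sum_congr rfl fun j _ => (map_smul _ _ _).symm
                  _ = S b := by rw [sum_counit_smul_right s]
      _ = S b * S a := by
          calc ∑ i ∈ r.index, counit (R := k) (r.left i) • (S b * S (r.right i))
              = S b * ∑ i ∈ r.index, counit (R := k) (r.left i) • S (r.right i) := by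
                rw [Finset.mul_sum]
                exact Finset.sum_congr rfl fun i _ => (mul_smul_comm _ _ _).symm
            _ = S b * S a := by
                congr 1
                calc ∑ i ∈ r.index, counit (R := k) (r.left i) • S (r.right i)
                    = S (∑ i ∈ r.index, counit (R := k) (r.left i) • r.right i) := by
                      rw [map_sum]
                      exact Finset.sum_congr rfl fun i _ => (map_smul _ _ _).symm
                  _ = S a := by rw [sum_counit_smul_right r]
  rw [← hM1, hM2]

end AuxHopf

noncomputable section QQ
open TensorProduct Coalgebra
variable {k : Type*} [Field k] {A : Type*} [Ring A] [HopfAlgebra k A]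

local notation "S" => HopfAlgebra.antipode (R := k)
local notation "m" => LinearMap.mul' k A


/-- `Ψ (x ⊗ (y ⊗ z)) = S x * (y * S z)`. -/
noncomputable def Psi : A ⊗[k] (A ⊗[k] A) →ₗ[k] A :=
  m ∘ₗ map S (m ∘ₗ map LinearMap.id S)

@[simp] lemma Psi_tmul (x y z : A) : Psi (x ⊗ₜ[k] (y ⊗ₜ[k] z)) = S x * (y * S z) := by
  simp [Psi]

lemma Psi_tmul_left (x : A) (w : A ⊗[k] A) :
    Psi (x ⊗ₜ[k] w) = S x * (m ((map LinearMap.id S) w)) := by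
  simp [Psi]

variable (t : NormalizedTwist k A)

lemma psi_comul_right : Psi ((map LinearMap.id (Coalgebra.comul (R := k))) t.J) = 1 := by
  have hmap : (Psi ∘ₗ map LinearMap.id (Coalgebra.comul (R := k)) : A ⊗[k] A →ₗ[k] A)
      = S ∘ₗ (TensorProduct.rid k A).toLinearMap ∘ₗ map LinearMap.id (Coalgebra.counit (R := k)) := by
    apply TensorProduct.ext'
    intro x y
    have h1 : (Psi ∘ₗ map LinearMap.id (Coalgebra.comul (R := k))) (x ⊗ₜ[k] y)
        = S x * (m ((map LinearMap.id S) (Coalgebra.comul (R := k) y))) := by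
      simp [Psi_tmul_left]
    rw [h1, show (map LinearMap.id S : A ⊗[k] A →ₗ[k] A ⊗[k] A)
        = (HopfAlgebra.antipode (R := k)).lTensor A from rfl,
      HopfAlgebra.mul_antipode_lTensor_comul_apply]
    have h2 : (S ∘ₗ (TensorProduct.rid k A).toLinearMap
        ∘ₗ map LinearMap.id (Coalgebra.counit (R := k))) (x ⊗ₜ[k] y)
        = Coalgebra.counit (R := k) y • S x := by simp
    rw [h2, Algebra.smul_def, ← Algebra.commutes]
  have := congrArg (fun F : A ⊗[k] A →ₗ[k] A => F t.J) hmap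
  simp only [LinearMap.comp_apply] at this
  rw [this]
  simp only [LinearEquiv.coe_coe]
  rw [t.id_counit, antipode_one']

lemma step1 : Psi ((Algebra.TensorProduct.assoc k k k A A A)
      ((map (Coalgebra.comul (R := k)) LinearMap.id) t.J * (t.J ⊗ₜ[k] (1:A)))
      * ((1:A) ⊗ₜ[k] t.Jinv)) = 1 := by
  rw [t.cocycle, mul_assoc, Algebra.TensorProduct.tmul_mul_tmul, one_mul, t.mul_inv]
  rw [show ((1:A) ⊗ₜ[k] (1 : A ⊗[k] A)) = (1 : A ⊗[k] (A ⊗[k] A)) from rfl, mul_one]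
  exact psi_comul_right t

lemma mulS_mul (y z : A) (v : A ⊗[k] A) :
    m ((map LinearMap.id S) ((y ⊗ₜ[k] z) * v)) = (y * (m ((map LinearMap.id S) v))) * S z := by
  induction v using TensorProduct.induction_on with
  | zero => simp
  | tmul p q =>
      rw [Algebra.TensorProduct.tmul_mul_tmul]
      simp [antipode_mul', mul_assoc]
  | add u w hu hw =>
      rw [mul_add, map_add, map_add, hu, hw, map_add, map_add]
      simp [mul_add, add_mul]

noncomputable def Theta : A ⊗[k] (A ⊗[k] A) →ₗ[k] A :=
  Psi ∘ₗ LinearMap.mulRight k ((1:A) ⊗ₜ[k] t.Jinv)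

lemma Theta_tmul (x y z : A) :
    Theta t (x ⊗ₜ[k] (y ⊗ₜ[k] z)) = S x * ((y * t.QJinv) * S z) := by
  show Psi ((x ⊗ₜ[k] (y ⊗ₜ[k] z)) * ((1:A) ⊗ₜ[k] t.Jinv)) = _
  rw [Algebra.TensorProduct.tmul_mul_tmul, mul_one, Psi_tmul_left, mulS_mul]
  rfl

lemma Theta_assoc_mul (w : A ⊗[k] A) (F G g : A) :
    Theta t ((Algebra.TensorProduct.assoc k k k A A A) ((w * (F ⊗ₜ[k] G)) ⊗ₜ[k] g))
      = S F * ((m ((map S LinearMap.id) w)) * ((G * t.QJinv) * S g)) := by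
  induction w using TensorProduct.induction_on with
  | zero => simp
  | tmul x y =>
      rw [Algebra.TensorProduct.tmul_mul_tmul]
      rw [show (Algebra.TensorProduct.assoc k k k A A A) (((x*F) ⊗ₜ[k] (y*G)) ⊗ₜ[k] g)
          = (x*F) ⊗ₜ[k] ((y*G) ⊗ₜ[k] g) from rfl]
      rw [Theta_tmul, antipode_mul']
      simp [mul_assoc]
  | add u w hu hw =>
      rw [add_mul, add_tmul, map_add, map_add, hu, hw, map_add, map_add]
      simp [add_mul, mul_add]

lemma theta_D (u v : A ⊗[k] A) :
    Theta t ((Algebra.TensorProduct.assoc k k k A A A)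
        ((map (Coalgebra.comul (R := k)) LinearMap.id u) * (v ⊗ₜ[k] (1:A))))
      = (m ((map S LinearMap.id) v)) *
          (t.QJinv * S ((TensorProduct.lid k A)
            ((map (Coalgebra.counit (R := k)) LinearMap.id) u))) := by
  induction v using TensorProduct.induction_on with
  | zero =>
      rw [show ((0 : A ⊗[k] A) ⊗ₜ[k] (1:A)) = (0 : (A ⊗[k] A) ⊗[k] A) from zero_tmul _ _]
      simp
  | tmul F G =>
      induction u using TensorProduct.induction_on with
      | zero => simp
      | tmul f g =>
          rw [show (map (Coalgebra.comul (R := k)) LinearMap.id) (f ⊗ₜ[k] g)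
              = (Coalgebra.comul (R := k) f) ⊗ₜ[k] g from rfl]
          rw [Algebra.TensorProduct.tmul_mul_tmul, mul_one, Theta_assoc_mul]
          rw [show (map S LinearMap.id : A ⊗[k] A →ₗ[k] A ⊗[k] A)
              = (HopfAlgebra.antipode (R := k)).rTensor A from rfl,
            HopfAlgebra.mul_antipode_rTensor_comul_apply]
          rw [show (map (Coalgebra.counit (R := k)) LinearMap.id) (f ⊗ₜ[k] g)
              = (Coalgebra.counit (R := k) f) ⊗ₜ[k] g from rfl]
          simp [map_smul, mul_smul_comm, ← Algebra.smul_def, mul_assoc]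
      | add u1 u2 h1 h2 =>
          rw [map_add, add_mul, map_add, map_add, h1, h2, map_add, map_add, map_add]
          simp [mul_add]
  | add v1 v2 h1 h2 =>
      rw [add_tmul, mul_add, map_add, map_add, h1, h2, map_add, map_add]
      simp [add_mul, mul_add]

lemma QJ_mul_QJinv : t.QJ * t.QJinv = 1 := by
  have hD := theta_D t t.J t.J
  rw [t.counit_id, antipode_one', mul_one] at hD
  have hL : Theta t ((Algebra.TensorProduct.assoc k k k A A A)
      ((map (Coalgebra.comul (R := k)) LinearMap.id t.J) * (t.J ⊗ₜ[k] (1:A)))) = 1 := step1 t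
  rw [hD] at hL
  exact hL

end QQ

noncomputable section TraceArg
open TensorProduct Coalgebra
variable {k : Type*} [Field k] {A : Type*} [Ring A] [HopfAlgebra k A]

local notation "S" => HopfAlgebra.antipode (R := k)


noncomputable def lmulHom : A →ₐ[k] Module.End k A where
  toFun a := LinearMap.mulLeft k a
  map_one' := by show LinearMap.mulLeft k (1:A) = 1; rw [LinearMap.mulLeft_one]; rfl
  map_mul' a b := by
    show LinearMap.mulLeft k (a*b) = LinearMap.mulLeft k a * LinearMap.mulLeft k b
    rw [LinearMap.mulLeft_mul]; rfl
  map_zero' := by ext; simp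
  map_add' a b := by ext; simp [add_mul]
  commutes' c := by ext; simp [Algebra.smul_def]

noncomputable def rmulSHom : A →ₐ[k] Module.End k A where
  toFun a := LinearMap.mulRight k (S a)
  map_one' := by
    show LinearMap.mulRight k (S (1:A)) = 1
    rw [antipode_one', LinearMap.mulRight_one]; rfl
  map_mul' a b := by
    show LinearMap.mulRight k (S (a*b)) = LinearMap.mulRight k (S a) * LinearMap.mulRight k (S b)
    rw [antipode_mul', LinearMap.mulRight_mul]; rfl
  map_zero' := by ext; simp
  map_add' a b := by ext; simp [mul_add]
  commutes' c := by
    ext b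
    have : (HopfAlgebra.antipode (R := k)) ((algebraMap k A) c) = algebraMap k A c := by
      rw [Algebra.algebraMap_eq_smul_one, map_smul, antipode_one']
    simp [this, Algebra.smul_def, Algebra.commutes]

noncomputable def rho : A ⊗[k] A →ₐ[k] Module.End k A :=
  Algebra.TensorProduct.lift lmulHom rmulSHom
    (fun x y => LinearMap.commute_mulLeft_right x (S y))

@[simp] lemma rho_tmul (x y : A) :
    (rho (x ⊗ₜ[k] y) : Module.End k A) = LinearMap.mulLeft k x ∘ₗ LinearMap.mulRight k (S y) := by
  rw [show rho (x ⊗ₜ[k] y) = lmulHom x * rmulSHom y from Algebra.TensorProduct.lift_tmul ..]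
  rfl

lemma adGen_eq (D : A →ₗ[k] A ⊗[k] A) (c : A) :
    adGen k A D (HopfAlgebra.antipode (R := k)) c = rho (D c) := by
  show (TensorProduct.lift _) (D c) = rho (D c)
  generalize D c = w
  induction w using TensorProduct.induction_on with
  | zero => simp
  | tmul x y => simp [adGen]
  | add u v hu hv => rw [map_add, map_add, hu, hv]

lemma adGenJ_eq (t : NormalizedTwist k A) (c : A) :
    adGen k A t.comulJ t.SJ c
      = LinearMap.mulRight k t.QJ ∘ₗ rho (t.comulJ c) ∘ₗ LinearMap.mulRight k t.QJinv := by
  show (TensorProduct.lift _) (t.comulJ c) = _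
  generalize t.comulJ c = w
  induction w using TensorProduct.induction_on with
  | zero => simp
  | tmul x y =>
      rw [rho_tmul]
      ext b
      simp [adGen, NormalizedTwist.SJ, mul_assoc]
  | add u v hu hv =>
      rw [map_add, map_add, hu, hv]
      ext b; simp [add_mul]

variable [FiniteDimensional k A]

lemma trace_adJ (t : NormalizedTwist k A) (hQ : t.QJ * t.QJinv = 1) (c : A) :
    LinearMap.trace k A (adGen k A t.comulJ t.SJ c)
      = LinearMap.trace k A (adGen k A (Coalgebra.comul (R := k))
          (HopfAlgebra.antipode (R := k)) c) := by
  rw [adGenJ_eq, adGen_eq]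
  have h1 : LinearMap.mulRight k t.QJ ∘ₗ rho (t.comulJ c) ∘ₗ LinearMap.mulRight k t.QJinv
      = (LinearMap.mulRight k t.QJ) * ((rho (t.comulJ c)) * (LinearMap.mulRight k t.QJinv)) := rfl
  rw [h1, LinearMap.trace_mul_comm]
  have h2 : rho (t.comulJ c) * LinearMap.mulRight k t.QJinv * LinearMap.mulRight k t.QJ
      = rho (t.comulJ c) := by
    rw [mul_assoc]
    have : (LinearMap.mulRight k t.QJinv) * (LinearMap.mulRight k t.QJ)
        = LinearMap.mulRight k (t.QJ * t.QJinv) := by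
      rw [LinearMap.mulRight_mul]; rfl
    rw [this, hQ]
    have h1 : LinearMap.mulRight k (1:A) = (1 : Module.End k A) := by
      ext b; simp
    rw [h1, mul_one]
  rw [h2]
  have h3 : t.comulJ c = t.Jinv * (Coalgebra.comul (R := k) c * t.J) := rfl
  have h4 : rho (t.comulJ c) = rho t.Jinv * (rho (Coalgebra.comul (R := k) c) * rho t.J) := by
    rw [h3, map_mul, map_mul]
  rw [h4, LinearMap.trace_mul_comm, mul_assoc, ← map_mul, t.mul_inv, map_one, mul_one]

end TraceArg

/-- Proposition 5.4. Let `A` be a finite-dimensional Hopf algebra and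
`J` a normalized twist for `A`. Then the Killing form of `A` is invariant under twisting:
`(a, b)ᴶ = (a, b)` for all `a, b ∈ A`; in particular `A^⊥ = (A^J)^⊥`. -/
theorem killing_form_twist_invariant
    (k : Type*) [Field k] (A : Type*) [Ring A] [HopfAlgebra k A] [FiniteDimensional k A]
    (t : NormalizedTwist k A) :
    (∀ a b : A, killingForm' k A t.comulJ t.SJ a b
        = killingForm' k A (Coalgebra.comul (R := k)) (HopfAlgebra.antipode (R := k)) a b) ∧
    killingRad k A t.comulJ t.SJ
      = killingRad k A (Coalgebra.comul (R := k)) (HopfAlgebra.antipode (R := k)) := by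
  have hform : ∀ a b : A, killingForm' k A t.comulJ t.SJ a b
      = killingForm' k A (Coalgebra.comul (R := k)) (HopfAlgebra.antipode (R := k)) a b := by
    intro a b
    show LinearMap.trace k A (adGen k A t.comulJ t.SJ (a * b)) = _
    exact trace_adJ t (QJ_mul_QJinv t) (a * b)
  refine ⟨hform, ?_⟩
  apply Submodule.ext
  intro a
  show (∀ b : A, killingForm' k A t.comulJ t.SJ a b = 0) ↔
    (∀ b : A, killingForm' k A (Coalgebra.comul (R := k)) (HopfAlgebra.antipode (R := k)) a b = 0)
  exact forall_congr' fun b => by rw [hform a b]
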